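/- arXiv:2009.00344 — 5 statements merged into one kernel-verified Lean document; each statement's English description precedes it below -/
import Mathlib

section
/- Let R = ℤ and S = aℤ + b for integers a, b. Then for every prime p, the sequence u_i = a·i + b (i ≥ 0) is a p-sequence of S, i.e., for each k > 0 the polynomial (x−u_0)⋯(x−u_{k−1})/((u_k−u_0)⋯(u_k−u_{k−1})) maps every element of S into ℤ_{(p)}. -/
/-- A rational number lies in the localization `ℤ_{(p)}`: it can be written `x / y`
with `y` not divisible by `p`. -/
def InZLoc (p : ℕ) (q : ℚ) : Prop :=
  ∃ x y : ℤ, ¬ ((p : ℤ) ∣ y) ∧ q = (x : ℚ) / (y : ℚ)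

/-- Let `S = aℤ + b`.  For every prime `p`, the sequence `u_i = a·i + b`
is a `p`-sequence of `S`: (aux lemmas below)

The product `∏_{i<k} (n - i)` equals the evaluation of the descending Pochhammer polynomial. -/
lemma prod_range_sub_eq_descPochhammer (k : ℕ) (n : ℤ) :
    ∏ i ∈ Finset.range k, (n - (i : ℤ)) = (descPochhammer ℤ k).eval n := by
  induction k with
  | zero => simp
  | succ k ih =>
      rw [Finset.prod_range_succ, ih, descPochhammer_succ_right]
      simp [Polynomial.eval_mul]

lemma factorial_dvd_prod_range_sub (k : ℕ) (n : ℤ) :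
    ((k.factorial : ℤ)) ∣ ∏ i ∈ Finset.range k, (n - (i : ℤ)) := by
  rw [prod_range_sub_eq_descPochhammer, Polynomial.eval_eq_smeval,
    Ring.descPochhammer_eq_factorial_smul_choose]
  exact ⟨Ring.choose n k, by simp [nsmul_eq_mul]⟩

/-- Let `S = aℤ + b`.  For every prime `p`, the sequence `u_i = a·i + b`
is a `p`-sequence of `S`: for each `k > 0` the polynomial
`(x−u_0)⋯(x−u_{k−1})/((u_k−u_0)⋯(u_k−u_{k−1}))` maps every element of `S` into `ℤ_{(p)}`. -/
theorem arithmetic_progression_p_sequence (a b : ℤ) (p : ℕ) (hp : p.Prime)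
    (k : ℕ) (hk : 0 < k) (n : ℤ) :
    InZLoc p
      ((∏ i ∈ Finset.range k, (((a * n + b : ℤ) : ℚ) - ((a * i + b : ℤ) : ℚ))) /
       (∏ i ∈ Finset.range k, (((a * k + b : ℤ) : ℚ) - ((a * i + b : ℤ) : ℚ)))) := by
  rcases eq_or_ne a 0 with rfl | ha
  · refine ⟨0, 1, by intro h; exact hp.one_lt.ne' (by exact_mod_cast Int.eq_one_of_dvd_one (by positivity) h), ?_⟩
    have : ∏ i ∈ Finset.range k, (((0 * n + b : ℤ) : ℚ) - ((0 * i + b : ℤ) : ℚ)) = 0 := by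
      apply Finset.prod_eq_zero (Finset.mem_range.mpr hk)
      push_cast; ring
    rw [this]; simp
  · obtain ⟨c, hc⟩ := factorial_dvd_prod_range_sub k n
    refine ⟨c, 1, by intro h; exact hp.one_lt.ne' (by exact_mod_cast Int.eq_one_of_dvd_one (by positivity) h), ?_⟩
    have h1 : ∀ m : ℤ, ∏ i ∈ Finset.range k, (((a * m + b : ℤ) : ℚ) - ((a * i + b : ℤ) : ℚ))
        = (a : ℚ) ^ k * ∏ i ∈ Finset.range k, ((m : ℚ) - (i : ℚ)) := by
      intro m
      rw [show ∏ i ∈ Finset.range k, (((a * m + b : ℤ) : ℚ) - ((a * i + b : ℤ) : ℚ))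
          = ∏ i ∈ Finset.range k, ((a : ℚ) * ((m : ℚ) - (i : ℚ))) from
        Finset.prod_congr rfl (fun i _ => by push_cast; ring)]
      rw [Finset.prod_mul_distrib, Finset.prod_const, Finset.card_range]
    have h2 : ∏ i ∈ Finset.range k, (((k : ℤ) : ℚ) - (i : ℚ)) = (k.factorial : ℚ) := by
      have := prod_range_sub_eq_descPochhammer k (k : ℤ)
      rw [Polynomial.eval_eq_smeval, Polynomial.descPochhammer_smeval_eq_descFactorial,
        Nat.descFactorial_self] at this
      have := congrArg (fun z : ℤ => (z : ℚ)) this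
      push_cast at this ⊢
      exact this
    have h3 : ∏ i ∈ Finset.range k, ((n : ℚ) - (i : ℚ)) = (k.factorial : ℚ) * (c : ℚ) := by
      have := congrArg (fun z : ℤ => (z : ℚ)) hc
      push_cast at this ⊢
      exact this
    rw [h1 n, h1 (k : ℤ), h3]
    push_cast at h2 ⊢
    rw [h2]
    have hfa : ((k.factorial : ℚ)) ≠ 0 := by positivity
    have haq : (a : ℚ) ^ k ≠ 0 := pow_ne_zero _ (by exact_mod_cast ha)
    field_simp
end

section
/- Let S be the set of squares of nonnegative integers. Then for every prime p, the sequence u_i = i² (i ≥ 0) is a p-sequence of S: for each k > 0, the polynomial (x−0²)(x−1²)⋯(x−(k−1)²)/((k²−0²)(k²−1²)⋯(k²−(k−1)²)) maps every square integer into ℤ_{(p)}. -/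
open Finset Nat


-- key product-factorial identity in ℕ
lemma aux_prod (n k : ℕ) (h : k ≤ n) :
    (∏ i ∈ range k, (n ^ 2 - i ^ 2)) * (n - k)! * (n - 1)! = n ! * (n + k - 1)! := by
  induction k with
  | zero => simp
  | succ k ih =>
    have hk : k ≤ n := by omega
    rw [prod_range_succ]
    have h1 : n ^ 2 - k ^ 2 = (n - k) * (n + k) := by
      rw [Nat.sq_sub_sq]; ring
    have h2 : (n - k)! = (n - k) * (n - (k+1))! := by
      have : n - k = (n - (k+1)) + 1 := by omega
      rw [this, Nat.factorial_succ]
    have h3 : n + (k+1) - 1 = (n + k - 1) + 1 := by omega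
    rw [h3, Nat.factorial_succ]
    have h4 : n + k - 1 + 1 = n + k := by omega
    calc (∏ i ∈ range k, (n ^ 2 - i ^ 2)) * (n ^ 2 - k ^ 2) * (n - (k+1))! * (n - 1)!
        = ((∏ i ∈ range k, (n ^ 2 - i ^ 2)) * (n - k)! * (n - 1)!) * (n + k) := by
          rw [h1, h2]; ring
      _ = n ! * ((n + k - 1 + 1) * (n + k - 1)!) := by rw [ih hk, h4]; ring

/-- Let `S` be the set of squares of nonnegative integers.  For every
prime `p`, the sequence `u_i = i²` is a `p`-sequence of `S`: for each `k > 0` the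
polynomial `(x−0²)⋯(x−(k−1)²)/((k²−0²)⋯(k²−(k−1)²))` maps every square integer
into `ℤ_{(p)}`. -/
theorem squares_p_sequence (p : ℕ) (hp : p.Prime) (k : ℕ) (hk : 0 < k) (n : ℕ) :
    InZLoc p
      ((∏ i ∈ Finset.range k, (((n ^ 2 : ℕ) : ℚ) - ((i ^ 2 : ℕ) : ℚ))) /
       (∏ i ∈ Finset.range k, (((k ^ 2 : ℕ) : ℚ) - ((i ^ 2 : ℕ) : ℚ)))) := by
  have h1 : ¬ ((p : ℤ) ∣ (1:ℤ)) := fun h => hp.ne_one (Nat.dvd_one.mp (by exact_mod_cast h))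
  -- case n < k : numerator is zero
  rcases lt_or_ge n k with hnk | hkn
  · refine ⟨0, 1, h1, ?_⟩
    rw [Finset.prod_eq_zero (Finset.mem_range.mpr hnk) (by simp)]
    simp
  -- casts of products
  have hNc : (∏ i ∈ Finset.range k, (((n ^ 2 : ℕ) : ℚ) - ((i ^ 2 : ℕ) : ℚ)))
      = ((∏ i ∈ Finset.range k, (n ^ 2 - i ^ 2) : ℕ) : ℚ) := by
    rw [Nat.cast_prod]
    refine Finset.prod_congr rfl fun i hi => ?_
    have : i ^ 2 ≤ n ^ 2 := Nat.pow_le_pow_left (by have := Finset.mem_range.mp hi; omega) 2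
    rw [Nat.cast_sub this]
  have hDc : (∏ i ∈ Finset.range k, (((k ^ 2 : ℕ) : ℚ) - ((i ^ 2 : ℕ) : ℚ)))
      = ((∏ i ∈ Finset.range k, (k ^ 2 - i ^ 2) : ℕ) : ℚ) := by
    rw [Nat.cast_prod]
    refine Finset.prod_congr rfl fun i hi => ?_
    have : i ^ 2 ≤ k ^ 2 := Nat.pow_le_pow_left (by have := Finset.mem_range.mp hi; omega) 2
    rw [Nat.cast_sub this]
  set N : ℕ := ∏ i ∈ Finset.range k, (n ^ 2 - i ^ 2) with hNdef
  set D : ℕ := ∏ i ∈ Finset.range k, (k ^ 2 - i ^ 2) with hDdef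
  have hDpos : 0 < D := by
    apply Finset.prod_pos
    intro i hi
    have hik := Finset.mem_range.mp hi
    have : i ^ 2 < k ^ 2 := Nat.pow_lt_pow_left hik (by norm_num)
    omega
  have hD0 : ((D : ℚ)) ≠ 0 := by exact_mod_cast hDpos.ne'
  rw [hNc, hDc]
  -- case n = k
  rcases eq_or_lt_of_le hkn with rfl | hlt
  · exact ⟨1, 1, h1, by rw [div_self hD0]; norm_num⟩
  -- main case: n ≥ k + 1
  obtain ⟨j, rfl⟩ : ∃ j, n = k + 1 + j := ⟨n - (k + 1), by omega⟩
  obtain ⟨l, rfl⟩ : ∃ l, k = l + 1 := ⟨k - 1, by omega⟩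
  set k := l + 1 with hkdef
  refine ⟨((2*k+1+j).choose (2*k) + (2*k+j).choose (2*k) : ℕ), 1, h1, ?_⟩
  push_cast [Int.cast_one]
  rw [div_one, div_eq_iff hD0]
  -- numerator identity
  have hN := aux_prod (k+1+j) k (by omega)
  rw [show k+1+j-k = j+1 from by omega, show k+1+j-1 = k+j from by omega,
      show k+1+j+k-1 = 2*k+j from by omega, ← hNdef] at hN
  have hNQ : (N : ℚ) * (j+1)! * (k+j)! = (k+1+j)! * (2*k+j)! := by exact_mod_cast hN
  -- denominator identity
  have hD := aux_prod k k le_rfl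
  rw [Nat.sub_self, show k-1 = l from by omega, show k+k-1 = 2*l+1 from by omega,
      ← hDdef, Nat.factorial_zero, mul_one] at hD
  have hDQ : (D : ℚ) * l ! = k ! * (2*l+1)! := by exact_mod_cast hD
  -- choose casts
  have hc1 : (((2*k+1+j).choose (2*k)) : ℚ) = (2*k+1+j)! / ((2*k)! * (j+1)!) := by
    rw [Nat.cast_choose ℚ (by omega), show 2*k+1+j - 2*k = j+1 from by omega]
  have hc2 : (((2*k+j).choose (2*k)) : ℚ) = (2*k+j)! / ((2*k)! * j !) := by
    rw [Nat.cast_choose ℚ (by omega), show 2*k+j - 2*k = j from by omega]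
  -- factorial recurrences
  have e1 : ((2*k : ℕ)! : ℚ) = (2*l+2) * (2*l+1)! := by
    rw [show 2*k = (2*l+1)+1 from by omega, Nat.factorial_succ]; push_cast; ring
  have e2 : ((2*k+1+j : ℕ)! : ℚ) = (2*k+1+j) * (2*k+j)! := by
    rw [show 2*k+1+j = (2*k+j)+1 from by omega, Nat.factorial_succ]; push_cast; ring
  have e3 : ((k+1+j : ℕ)! : ℚ) = (k+1+j) * (k+j)! := by
    rw [show k+1+j = (k+j)+1 from by omega, Nat.factorial_succ]; push_cast; ring
  have e4 : ((k : ℕ)! : ℚ) = (l+1) * l ! := by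
    rw [hkdef, Nat.factorial_succ]; push_cast; ring
  have e5 : (((j+1) : ℕ)! : ℚ) = (j+1) * j ! := by
    rw [Nat.factorial_succ]; push_cast; ring
  have fne : ∀ m : ℕ, ((m ! : ℚ)) ≠ 0 := fun m => Nat.cast_ne_zero.mpr m.factorial_ne_zero
  -- derive N and D as quotients
  have hNval : (N : ℚ) = (k+1+j)! * (2*k+j)! / ((j+1)! * (k+j)!) := by
    field_simp
    linear_combination hNQ
  have hDval : (D : ℚ) = k ! * (2*l+1)! / l ! := by
    field_simp
    linear_combination hDQ
  rw [hNval, hDval, hc1, hc2, e1, e2, e3, e4, e5]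
  have h2l : ((2*l+1:ℕ)! : ℚ) ≠ 0 := fne _
  field_simp
  push_cast
  ring
end

section
/- Let S = aℤ + b for integers a ≠ 0 and b, and let f = g/d ∈ ℚ[x] with g ∈ ℤ[x], d ∈ ℤ nonzero, deg f = k. Then f ∈ Int(S, ℤ) if and only if f(a·i + b) ∈ ℤ for all 0 ≤ i ≤ k. -/
open Polynomial

private lemma diff_natDegree_le (k : ℕ) (h : ℚ[X]) (hdeg : h.natDegree ≤ k + 1) :
    (taylor 1 h - h).natDegree ≤ k := by
  rw [natDegree_le_iff_coeff_eq_zero]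
  intro N hN
  rw [coeff_sub, taylor_coeff]
  rcases lt_or_ge (k + 1) N with hN' | hN'
  · rw [coeff_eq_zero_of_natDegree_lt (by omega : h.natDegree < N), sub_zero]
    rw [← taylor_coeff (r := (1:ℚ))]
    exact coeff_eq_zero_of_natDegree_lt (by rw [natDegree_taylor]; omega)
  · have hNk : N = k + 1 := le_antisymm hN' hN
    subst hNk
    have : hasseDeriv (k + 1) h = C (h.coeff (k + 1)) := by
      ext m
      rw [hasseDeriv_coeff, coeff_C]
      rcases Nat.eq_zero_or_pos m with rfl | hm
      · simp
      · rw [if_neg hm.ne', coeff_eq_zero_of_natDegree_lt (lt_of_le_of_lt hdeg (by omega)),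
          mul_zero]
    rw [this, eval_C, sub_self]

private lemma int_on_consecutive (k : ℕ) : ∀ h : ℚ[X], h.natDegree ≤ k →
    (∀ i : ℕ, i ≤ k → ∃ m : ℤ, h.eval (i : ℚ) = (m : ℚ)) →
    ∀ n : ℤ, ∃ m : ℤ, h.eval (n : ℚ) = (m : ℚ) := by
  induction k with
  | zero =>
    intro h hdeg hvals n
    obtain ⟨m, hm⟩ := hvals 0 le_rfl
    refine ⟨m, ?_⟩
    rw [eq_C_of_natDegree_le_zero hdeg] at hm ⊢
    simpa using hm
  | succ k ih =>
    intro h hdeg hvals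
    set g : ℚ[X] := taylor 1 h - h with hg
    have hgdeg : g.natDegree ≤ k := diff_natDegree_le k h hdeg
    have hgeval : ∀ x : ℚ, g.eval x = h.eval (x + 1) - h.eval x := by
      intro x; rw [hg, eval_sub, taylor_eval]
    have hgint : ∀ n : ℤ, ∃ m : ℤ, g.eval (n : ℚ) = (m : ℚ) := by
      refine ih g hgdeg ?_
      intro i hi
      obtain ⟨m1, hm1⟩ := hvals (i + 1) (by omega)
      obtain ⟨m2, hm2⟩ := hvals i (by omega)
      exact ⟨m1 - m2, by rw [hgeval]; push_cast at hm1 ⊢; rw [hm1, hm2]⟩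
    intro n
    induction n using Int.induction_on with
    | zero => exact_mod_cast hvals 0 (by omega)
    | succ n ihn =>
      obtain ⟨m, hm⟩ := ihn
      obtain ⟨m', hm'⟩ := hgint (n : ℤ)
      refine ⟨m + m', ?_⟩
      have h1 := hgeval ((n : ℤ) : ℚ)
      rw [hm, hm'] at h1
      push_cast at h1 ⊢
      linarith
    | pred n ihn =>
      obtain ⟨m, hm⟩ := ihn
      obtain ⟨m', hm'⟩ := hgint (-(n:ℤ) - 1)
      refine ⟨m - m', ?_⟩
      have h1 := hgeval ((-(n:ℤ) - 1 : ℤ) : ℚ)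
      rw [hm'] at h1
      push_cast at h1 hm ⊢
      have h3 : (-(n:ℚ) - 1 + 1) = -(n:ℚ) := by ring
      rw [h3, hm] at h1
      linarith

/-- Let `S = aℤ + b` with `a ≠ 0`, and let `f = g/d ∈ ℚ[x]` with
`g ∈ ℤ[x]`, `d ≠ 0`, `deg f = k`.  Then `f ∈ Int(S, ℤ)` iff `f(a·i + b) ∈ ℤ` for
all `0 ≤ i ≤ k`. -/
theorem int_valued_iff_on_progression (a b : ℤ) (ha : a ≠ 0) (g : ℤ[X]) (d : ℤ)
    (hd : d ≠ 0) (k : ℕ) (f : ℚ[X])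
    (hf : f = C ((d : ℚ))⁻¹ * g.map (Int.castRingHom ℚ))
    (hdeg : f.natDegree = k) :
    (∀ n : ℤ, ∃ m : ℤ, f.eval ((a * n + b : ℤ) : ℚ) = (m : ℚ)) ↔
      (∀ i : ℕ, i ≤ k → ∃ m : ℤ, f.eval ((a * i + b : ℤ) : ℚ) = (m : ℚ)) := by
  constructor
  · intro H i _; exact H i
  · intro H n
    set h : ℚ[X] := f.comp (C (a : ℚ) * X + C (b : ℚ)) with hh
    have hhe : ∀ x : ℚ, h.eval x = f.eval ((a : ℚ) * x + (b : ℚ)) := by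
      intro x; simp [hh, eval_comp]
    have hhdeg : h.natDegree ≤ k := by
      calc h.natDegree ≤ f.natDegree * (C (a : ℚ) * X + C (b : ℚ)).natDegree :=
            natDegree_comp_le
        _ ≤ k * 1 := by
            refine Nat.mul_le_mul hdeg.le ?_
            simpa using natDegree_linear_le (a := (a:ℚ)) (b := (b:ℚ))
        _ = k := mul_one k
    have := int_on_consecutive k h hhdeg (fun i hi => by
      obtain ⟨m, hm⟩ := H i hi
      exact ⟨m, by rw [hhe]; push_cast at hm ⊢; exact hm⟩) n
    obtain ⟨m, hm⟩ := this
    rw [hhe] at hm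
    exact ⟨m, by push_cast; exact_mod_cast hm⟩
end

section
/- Let g₁ = x⁵ − 11x⁴ + 42x³ − 62x² + 26x − 2 and g₂ = x⁵ − 11x⁴ + 42x³ − 63x² + 30x + 3 in ℤ[x]. Then f = g₁g₂/6 ∈ Int(ℤ), i.e., 6 divides g₁(n)g₂(n) for every integer n. -/
open Polynomial

/-- Let `g₁ = x⁵ − 11x⁴ + 42x³ − 62x² + 26x − 2` and
`g₂ = x⁵ − 11x⁴ + 42x³ − 63x² + 30x + 3` in `ℤ[x]`.  Then `f = g₁g₂/6 ∈ Int(ℤ)`,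
i.e. `6` divides `g₁(n)g₂(n)` for every integer `n`. -/
theorem example_g1g2_div6_int_valued
    (g₁ g₂ : ℤ[X])
    (hg₁ : g₁ = X ^ 5 - 11 * X ^ 4 + 42 * X ^ 3 - 62 * X ^ 2 + 26 * X - 2)
    (hg₂ : g₂ = X ^ 5 - 11 * X ^ 4 + 42 * X ^ 3 - 63 * X ^ 2 + 30 * X + 3) :
    (∀ n : ℤ, ∃ m : ℤ,
        (C (1 / 6 : ℚ) * ((g₁ * g₂).map (Int.castRingHom ℚ))).eval (n : ℚ) = (m : ℚ)) ∧
      (∀ n : ℤ, (6 : ℤ) ∣ g₁.eval n * g₂.eval n) := by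
  have hdvd : ∀ n : ℤ, (6 : ℤ) ∣ g₁.eval n * g₂.eval n := by
    intro n
    have : ((g₁.eval n * g₂.eval n : ℤ) : ZMod 6) = 0 := by
      subst hg₁ hg₂
      simp only [eval_mul, eval_sub, eval_add, eval_pow, eval_X, eval_ofNat, eval_one]
      push_cast
      generalize ((n : ℤ) : ZMod 6) = a
      revert a
      decide
    exact (ZMod.intCast_zmod_eq_zero_iff_dvd _ 6).mp this
  refine ⟨fun n => ?_, hdvd⟩
  obtain ⟨m, hm⟩ := hdvd n
  refine ⟨m, ?_⟩
  have hev : ((g₁ * g₂).map (Int.castRingHom ℚ)).eval ((n : ℤ) : ℚ)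
      = (((g₁ * g₂).eval n : ℤ) : ℚ) := by
    simp [Polynomial.eval_intCast_map]
  rw [eval_mul, eval_C, hev]
  rw [Polynomial.eval_mul, hm]
  push_cast
  ring
end

section
/- For the set S of prime numbers in ℤ, the sequence 2, 3, 5, 7, 17 is a 2-sequence of length 4: for each 1 ≤ k ≤ 4, the polynomial (x−u_0)⋯(x−u_{k−1})/((u_k−u_0)⋯(u_k−u_{k−1})) with (u_0,…,u_4) = (2,3,5,7,17) maps every prime number into ℤ_{(2)}. -/
/-- A rational number lies in the localization `ℤ_{(2)}`: it can be written `x / y`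
with `y` odd. -/
def InZ2 (q : ℚ) : Prop :=
  ∃ x y : ℤ, ¬ ((2 : ℤ) ∣ y) ∧ q = (x : ℚ) / (y : ℚ)

/-- The sequence `2, 3, 5, 7, 17` (extended arbitrarily by `0`). -/
def primeSeq : ℕ → ℤ
  | 0 => 2
  | 1 => 3
  | 2 => 5
  | 3 => 7
  | 4 => 17
  | _ => 0

/-- For the set `S` of prime numbers in `ℤ`, the sequence
`2, 3, 5, 7, 17` is a `2`-sequence of length `4`: for each `1 ≤ k ≤ 4` the
polynomial `(x−u_0)⋯(x−u_{k−1})/((u_k−u_0)⋯(u_k−u_{k−1}))` maps every prime number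
into `ℤ_{(2)}`. -/
theorem primes_two_sequence (k : ℕ) (hk1 : 1 ≤ k) (hk4 : k ≤ 4)
    (n : ℕ) (hn : n.Prime) :
    InZ2
      ((∏ i ∈ Finset.range k, ((n : ℚ) - (primeSeq i : ℚ))) /
       (∏ i ∈ Finset.range k, ((primeSeq k : ℚ) - (primeSeq i : ℚ)))) := by
  rcases hn.eq_two_or_odd' with h2 | hodd
  · -- n = 2: numerator vanishes
    subst h2
    refine ⟨0, 1, by decide, ?_⟩
    interval_cases k <;>
      simp [Finset.prod_range_succ, primeSeq]
  · obtain ⟨m, hm⟩ := hodd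
    have hmq : (n : ℚ) = 2 * m + 1 := by rw [hm]; push_cast; ring
    interval_cases k <;>
      simp only [Finset.prod_range_succ, Finset.prod_range_one, primeSeq, hmq]
    · -- k = 1, denominator 1
      refine ⟨2 * m - 1, 1, by decide, ?_⟩
      push_cast; ring
    · -- k = 2
      refine ⟨(2 * m - 1) * ((m : ℤ) - 1), 3, by decide, ?_⟩
      rw [div_eq_div_iff (by norm_num) (by norm_num)]
      push_cast; ring
    · -- k = 3
      rcases Nat.even_or_odd m with ⟨t, ht⟩ | ⟨t, ht⟩
      · refine ⟨(2 * m - 1) * ((m : ℤ) - 1) * ((t : ℤ) - 1), 5, by decide, ?_⟩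
        rw [div_eq_div_iff (by norm_num) (by norm_num)]
        have : (m : ℚ) = 2 * t := by rw [ht]; push_cast; ring
        rw [this]; push_cast [ht]; ring
      · refine ⟨(2 * m - 1) * (t : ℤ) * ((m : ℤ) - 2), 5, by decide, ?_⟩
        rw [div_eq_div_iff (by norm_num) (by norm_num)]
        have : (m : ℚ) = 2 * t + 1 := by rw [ht]; push_cast; ring
        rw [this]; push_cast [ht]; ring
    · -- k = 4
      rcases Nat.even_or_odd m with ⟨t, ht⟩ | ⟨t, ht⟩
      · refine ⟨(2 * m - 1) * ((m : ℤ) - 1) * ((t : ℤ) - 1) * ((m : ℤ) - 3),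
          1575, by decide, ?_⟩
        rw [div_eq_div_iff (by norm_num) (by norm_num)]
        have : (m : ℚ) = 2 * t := by rw [ht]; push_cast; ring
        rw [this]; push_cast [ht]; ring
      · refine ⟨(2 * m - 1) * (t : ℤ) * ((m : ℤ) - 2) * ((m : ℤ) - 3),
          1575, by decide, ?_⟩
        rw [div_eq_div_iff (by norm_num) (by norm_num)]
        have : (m : ℚ) = 2 * t + 1 := by rw [ht]; push_cast; ring
        rw [this]; push_cast [ht]; ring
end
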